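/- Let α be a composition of n and T_1, T_2 ∈ SIT(α). If π_i^{RS*}(T_1) = T_2 for some 1 ≤ i ≤ n−1 and T_1 ≠ T_2, then inv(σ(T_2)) = inv(σ(T_1)) + 1. -/

import Mathlib

open Classical

namespace ImmHecke

/-- A filling assigns a natural-number entry to each cell `(row, column)` (0-indexed);
row `0` is the bottom row.  Cells outside the diagram carry the junk value `0`. -/
abbrev Filling : Type := ℕ × ℕ → ℕ

/-- `c` is a cell of the diagram of the composition `α` (0-indexed rows and columns;
row `i` has `α_i` cells). -/
def IsCell (α : List ℕ) (c : ℕ × ℕ) : Prop :=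
  c.1 < α.length ∧ c.2 < α.getD c.1 0

/-- `α` is a composition of `n`: a list of positive integers summing to `n`. -/
def IsComposition (α : List ℕ) (n : ℕ) : Prop :=
  (∀ a ∈ α, 0 < a) ∧ α.sum = n

/-- `T` is a bijective filling of the diagram of `α` with the entries `1, …, n`
(where `n = α.sum`), and with value `0` off the diagram. -/
def IsStdFilling (α : List ℕ) (T : Filling) : Prop :=
  (∀ c, ¬ IsCell α c → T c = 0) ∧
  (∀ c, IsCell α c → 1 ≤ T c ∧ T c ≤ α.sum) ∧
  (∀ c c', IsCell α c → IsCell α c' → T c = T c' → c = c') ∧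
  (∀ m, 1 ≤ m → m ≤ α.sum → ∃ c, IsCell α c ∧ T c = m)

/-- A standard immaculate tableau of shape `α`: a bijective standard filling whose
first-column entries strictly increase bottom to top and whose rows strictly
increase left to right. -/
def IsSIT (α : List ℕ) (T : Filling) : Prop :=
  IsStdFilling α T ∧
  (∀ i i' : ℕ, IsCell α (i, 0) → IsCell α (i', 0) → i < i' → T (i, 0) < T (i', 0)) ∧
  (∀ i j j' : ℕ, IsCell α (i, j) → IsCell α (i, j') → j < j' → T (i, j) < T (i, j'))

/-- A standard extended tableau of shape `α`: a bijective standard filling whose rows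
strictly increase left to right and all of whose columns strictly increase
bottom to top.  Note `SET(α) ⊆ SIT(α)`. -/
def IsSET (α : List ℕ) (T : Filling) : Prop :=
  IsStdFilling α T ∧
  (∀ i j j' : ℕ, IsCell α (i, j) → IsCell α (i, j') → j < j' → T (i, j) < T (i, j')) ∧
  (∀ i i' j : ℕ, IsCell α (i, j) → IsCell α (i', j) → i < i' → T (i, j) < T (i', j))

/-- `SIT*(α)`: standard immaculate tableaux whose first column contains exactly the
entries `1, 2, …, ℓ(α)`. -/
def IsSITstar (α : List ℕ) (T : Filling) : Prop :=
  IsSIT α T ∧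
  (∀ i, IsCell α (i, 0) → 1 ≤ T (i, 0) ∧ T (i, 0) ≤ α.length) ∧
  (∀ m, 1 ≤ m → m ≤ α.length → ∃ i, IsCell α (i, 0) ∧ T (i, 0) = m)

/-- In `T`, the entry `m+1` lies in a row strictly above the row of `m`. -/
def SuccAbove (α : List ℕ) (T : Filling) (m : ℕ) : Prop :=
  ∃ c c', IsCell α c ∧ IsCell α c' ∧ T c = m ∧ T c' = m + 1 ∧ c.1 < c'.1

/-- In `T`, the entries `m` and `m+1` lie in the same row. -/
def SuccSameRow (α : List ℕ) (T : Filling) (m : ℕ) : Prop :=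
  ∃ c c', IsCell α c ∧ IsCell α c' ∧ T c = m ∧ T c' = m + 1 ∧ c.1 = c'.1

/-- In `T`, the entry `m+1` lies in a row strictly below the row of `m`. -/
def SuccBelow (α : List ℕ) (T : Filling) (m : ℕ) : Prop :=
  ∃ c c', IsCell α c ∧ IsCell α c' ∧ T c = m ∧ T c' = m + 1 ∧ c'.1 < c.1

/-- In `T`, the entries `m` and `m+1` are both in the first column. -/
def BothFirstColumn (α : List ℕ) (T : Filling) (m : ℕ) : Prop :=
  ∃ c c', IsCell α c ∧ IsCell α c' ∧ T c = m ∧ T c' = m + 1 ∧ c.2 = 0 ∧ c'.2 = 0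

/-- `s_i(T)`: exchange the entries `i` and `i+1` of `T`. -/
def swapEntries (i : ℕ) (T : Filling) : Filling :=
  fun c => if T c = i then i + 1 else if T c = i + 1 then i else T c

/-- The row-strict dual immaculate 0-Hecke operator `π_i^{RS*}` on `SIT(α) ∪ {0}`
(`0` is encoded as `none`): `π_i(T) = T` if `i+1` is strictly above `i`;
`π_i(T) = 0` if `i` and `i+1` are in the same row; `π_i(T) = s_i(T)` if `i+1` is
strictly below `i`. -/
noncomputable def piRS (α : List ℕ) (i : ℕ) : Option Filling → Option Filling
  | none => none
  | some T =>
    if SuccAbove α T i then some T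
    else if SuccSameRow α T i then none
    else some (swapEntries i T)

/-- The dual immaculate 0-Hecke operator `π_i^{S*}` on `SIT(α) ∪ {0}`:
`π_i(T) = T` if `i+1` is in a row weakly below `i`; `π_i(T) = 0` if `i` and `i+1`
are both in the first column; `π_i(T) = s_i(T)` if `i+1` is strictly above `i`
and `i, i+1` are not both in the first column. -/
noncomputable def piS (α : List ℕ) (i : ℕ) : Option Filling → Option Filling
  | none => none
  | some T =>
    if SuccSameRow α T i ∨ SuccBelow α T i then some T
    else if BothFirstColumn α T i then none
    else some (swapEntries i T)

/-- The 0-Hecke operator `π_i^{A*}` on `SIT(α)`: `π_i(T) = T` if `i+1` is strictly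
above `i` or in the same row as `i`; `π_i(T) = s_i(T)` if `i+1` is strictly below `i`. -/
noncomputable def piA (α : List ℕ) (i : ℕ) (T : Filling) : Filling :=
  if SuccBelow α T i then swapEntries i T else T

/-- The 0-Hecke operator `π_i^{Ā*}` on `SIT(α) ∪ {0}`: `π_i(T) = T` if `i+1` is
strictly below `i`; `π_i(T) = 0` if `i` and `i+1` are in the same row or both in
the first column; `π_i(T) = s_i(T)` if `i+1` is strictly above `i` and `i, i+1`
are not both in the first column. -/
noncomputable def piAbar (α : List ℕ) (i : ℕ) : Option Filling → Option Filling
  | none => none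
  | some T =>
    if SuccBelow α T i then some T
    else if SuccSameRow α T i ∨ BothFirstColumn α T i then none
    else some (swapEntries i T)

/-- `x` belongs to `SIT(α) ∪ {0}` (with `0 = none`). -/
def InSITZ (α : List ℕ) (x : Option Filling) : Prop :=
  ∀ T, x = some T → IsSIT α T

/-- Successively apply the operators `π_{i_1}^{RS*}, …, π_{i_r}^{RS*}` (the list `l = [i_1, …, i_r]`). -/
noncomputable def applySeqRS (α : List ℕ) (l : List ℕ) (x : Option Filling) : Option Filling :=
  l.foldl (fun y i => piRS α i y) x

/-- Successively apply the operators `π_{i_1}^{S*}, …, π_{i_r}^{S*}`. -/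
noncomputable def applySeqS (α : List ℕ) (l : List ℕ) (x : Option Filling) : Option Filling :=
  l.foldl (fun y i => piS α i y) x

/-- The relation `T₁ ≼ T₂` on `SIT(α)`: some sequence of operators `π_i^{RS*}`
(indices in `{1, …, n-1}`, possibly empty) sends `T₁` to `T₂`. -/
def preRS (α : List ℕ) (T₁ T₂ : Filling) : Prop :=
  ∃ l : List ℕ, (∀ i ∈ l, 1 ≤ i ∧ i ≤ α.sum - 1) ∧ applySeqRS α l (some T₁) = some T₂

/-- The one-line notation of `σ(T)`: read the entries of `T` from right to left in
each row, rows from top to bottom. -/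
def readingWord (α : List ℕ) (T : Filling) : List ℕ :=
  ((List.range α.length).reverse).flatMap
    (fun i => ((List.range (α.getD i 0)).map fun j => T (i, j)).reverse)

/-- The number of inversions of a word `w`: pairs of positions `p < q` with `w p > w q`. -/
def inversions (w : List ℕ) : ℕ :=
  ((Finset.range w.length ×ˢ Finset.range w.length).filter
    (fun pq : ℕ × ℕ => pq.1 < pq.2 ∧ w.getD pq.2 0 < w.getD pq.1 0)).card

/-- `S⁰_α`: first column contains `1, …, ℓ` bottom to top; the remaining cells are
filled with `ℓ+1, …, n` consecutively, reading rows from top to bottom and left to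
right within each row. -/
noncomputable def S0 (α : List ℕ) : Filling := fun c =>
  if IsCell α c then
    if c.2 = 0 then c.1 + 1
    else
      α.length + (((List.range α.length).filter fun r => c.1 < r).map fun r => α.getD r 0 - 1).sum + c.2
  else 0

/-- `S^{row}_α`: the row superstandard tableau, entries `1, …, n` placed consecutively
reading rows bottom to top, left to right within each row. -/
noncomputable def Srow (α : List ℕ) : Filling := fun c =>
  if IsCell α c then (α.take c.1).sum + c.2 + 1 else 0

/-- `S^{row*}_α`: first column contains `1, …, ℓ` bottom to top; the remaining cells
are filled with `ℓ+1, …, n` consecutively, reading rows bottom to top, left to right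
within each row. -/
noncomputable def SrowStar (α : List ℕ) : Filling := fun c =>
  if IsCell α c then
    if c.2 = 0 then c.1 + 1
    else α.length + ((List.range c.1).map fun r => α.getD r 0 - 1).sum + c.2
  else 0

/-- `S^{col}_α`: the column superstandard tableau, entries `1, …, n` placed
consecutively reading columns bottom to top, columns left to right. -/
noncomputable def Scol (α : List ℕ) : Filling := fun c =>
  if IsCell α c then
    ((List.range c.2).map fun j' =>
        ((List.range α.length).filter fun r => j' < α.getD r 0).length).sum
      + ((List.range c.1).filter fun r => c.2 < α.getD r 0).length + 1
  else 0

/-- The image of a basis element of `V_α` under the linearly extended operator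
`π_i^{RS*}` (the value `0` of the operator is interpreted as the zero vector). -/
noncomputable def piTargetRS (α : List ℕ) (i : ℕ) (T : {T : Filling // IsSIT α T}) :
    ({T : Filling // IsSIT α T} →₀ ℚ) :=
  match piRS α i (some T.val) with
  | none => 0
  | some T' => if h : IsSIT α T' then Finsupp.single ⟨T', h⟩ 1 else 0

/-- The operator `π_i^{RS*}` extended to a `ℚ`-linear endomorphism of the free
`ℚ`-vector space `V_α` with basis `SIT(α)`. -/
noncomputable def piRSLin (α : List ℕ) (i : ℕ) :
    ({T : Filling // IsSIT α T} →₀ ℚ) →ₗ[ℚ] ({T : Filling // IsSIT α T} →₀ ℚ) :=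
  Finsupp.lsum ℚ fun T => LinearMap.toSpanSingleton ℚ _ (piTargetRS α i T)

/-- The image of a basis element of `Z_α` under the linearly extended operator
`π_i^{RS*}`. -/
noncomputable def piTargetSET (α : List ℕ) (i : ℕ) (T : {T : Filling // IsSET α T}) :
    ({T : Filling // IsSET α T} →₀ ℚ) :=
  match piRS α i (some T.val) with
  | none => 0
  | some T' => if h : IsSET α T' then Finsupp.single ⟨T', h⟩ 1 else 0

/-- The operator `π_i^{RS*}` extended to a `ℚ`-linear endomorphism of the free
`ℚ`-vector space `Z_α` with basis `SET(α)`. -/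
noncomputable def piRSLinSET (α : List ℕ) (i : ℕ) :
    ({T : Filling // IsSET α T} →₀ ℚ) →ₗ[ℚ] ({T : Filling // IsSET α T} →₀ ℚ) :=
  Finsupp.lsum ℚ fun T => LinearMap.toSpanSingleton ℚ _ (piTargetSET α i T)

lemma readingWord_comp (α : List ℕ) (f : ℕ → ℕ) (T : Filling) :
    readingWord α (fun c => f (T c)) = (readingWord α T).map f := by
  simp [readingWord, List.map_flatMap, Function.comp_def]

lemma swap_lt (i x y : ℕ) (hxy : x ≠ y) (hno : ¬ (x = i + 1 ∧ y = i)) :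
    ((if y = i then i + 1 else if y = i + 1 then i else y) <
      (if x = i then i + 1 else if x = i + 1 then i else x))
      ↔ (y < x ∨ (x = i ∧ y = i + 1)) := by
  split_ifs <;> omega

lemma exists_lt_getD {x y : ℕ} {l₁ l₂ : List ℕ} (hx : x ∈ l₁) (hy : y ∈ l₂) :
    ∃ p q, p < q ∧ q < (l₁ ++ l₂).length ∧
      (l₁ ++ l₂).getD p 0 = x ∧ (l₁ ++ l₂).getD q 0 = y := by
  obtain ⟨p, hp, hxp⟩ := List.mem_iff_getElem.mp hx
  obtain ⟨q, hq, hyq⟩ := List.mem_iff_getElem.mp hy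
  refine ⟨p, l₁.length + q, by omega, by simp; omega, ?_, ?_⟩
  · rw [List.getD_eq_getElem _ _ (by simp; omega), List.getElem_append_left hp]
    exact hxp
  · rw [List.getD_eq_getElem _ _ (by simp; omega),
      List.getElem_append_right (by omega)]
    simpa using hyq

lemma inversions_swap (w : List ℕ) (i p q : ℕ)
    (hpq : p < q) (hq : q < w.length)
    (hwp : w.getD p 0 = i) (hwq : w.getD q 0 = i + 1)
    (hnd : ∀ r r', r < w.length → r' < w.length → w.getD r 0 = w.getD r' 0 → r = r') :
    inversions (w.map fun x => if x = i then i + 1 else if x = i + 1 then i else x)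
      = inversions w + 1 := by
  have hp : p < w.length := lt_trans hpq hq
  set f : ℕ → ℕ := fun x => if x = i then i + 1 else if x = i + 1 then i else x with hf
  have hget : ∀ r, r < w.length → (w.map f).getD r 0 = f (w.getD r 0) := by
    intro r hr
    rw [List.getD_eq_getElem _ _ (by simpa using hr), List.getD_eq_getElem _ _ hr,
      List.getElem_map]
  have hiff : ∀ a b, a < w.length → b < w.length → a < b →
      (f (w.getD b 0) < f (w.getD a 0) ↔ (w.getD b 0 < w.getD a 0 ∨ (a = p ∧ b = q))) := by
    intro a b ha hb hab
    have hxy : w.getD a 0 ≠ w.getD b 0 := fun h' => absurd (hnd a b ha hb h') (by omega)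
    have hno : ¬ (w.getD a 0 = i + 1 ∧ w.getD b 0 = i) := by
      rintro ⟨h1, h2⟩
      have := hnd a q ha hq (by rw [h1, hwq])
      have := hnd b p hb hp (by rw [h2, hwp])
      omega
    have hpair : (a = p ∧ b = q) ↔ (w.getD a 0 = i ∧ w.getD b 0 = i + 1) := by
      constructor
      · rintro ⟨rfl, rfl⟩; exact ⟨hwp, hwq⟩
      · rintro ⟨h1, h2⟩
        exact ⟨hnd a p ha hp (by rw [h1, hwp]), hnd b q hb hq (by rw [h2, hwq])⟩
    rw [hpair]
    exact swap_lt i _ _ hxy hno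
  unfold inversions
  simp only [List.length_map]
  have key : ((Finset.range w.length ×ˢ Finset.range w.length).filter
      (fun pq : ℕ × ℕ => pq.1 < pq.2 ∧ (w.map f).getD pq.2 0 < (w.map f).getD pq.1 0))
      = insert (p, q) ((Finset.range w.length ×ˢ Finset.range w.length).filter
      (fun pq : ℕ × ℕ => pq.1 < pq.2 ∧ w.getD pq.2 0 < w.getD pq.1 0)) := by
    ext ⟨a, b⟩
    simp only [Finset.mem_insert, Finset.mem_filter, Finset.mem_product, Finset.mem_range,
      Prod.mk.injEq]
    constructor
    · rintro ⟨⟨ha, hb⟩, hab, hlt⟩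
      rw [hget a ha, hget b hb, hiff a b ha hb hab] at hlt
      rcases hlt with h' | ⟨rfl, rfl⟩
      · exact Or.inr ⟨⟨ha, hb⟩, hab, h'⟩
      · exact Or.inl ⟨rfl, rfl⟩
    · rintro (⟨rfl, rfl⟩ | ⟨⟨ha, hb⟩, hab, h'⟩)
      · refine ⟨⟨hp, hq⟩, hpq, ?_⟩
        rw [hget _ hp, hget _ hq, hiff _ _ hp hq hpq]
        exact Or.inr ⟨rfl, rfl⟩
      · refine ⟨⟨ha, hb⟩, hab, ?_⟩
        rw [hget a ha, hget b hb, hiff a b ha hb hab]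
        exact Or.inl h'
  have hnm : (p, q) ∉ ((Finset.range w.length ×ˢ Finset.range w.length).filter
      (fun pq : ℕ × ℕ => pq.1 < pq.2 ∧ w.getD pq.2 0 < w.getD pq.1 0)) := by
    simp only [Finset.mem_filter, Finset.mem_product, Finset.mem_range, not_and]
    intro _ _
    rw [hwp, hwq]; omega
  rw [key, Finset.card_insert_of_notMem hnm]

lemma readingWord_nodup (α : List ℕ) (T : Filling)
    (hinj : ∀ c c', IsCell α c → IsCell α c' → T c = T c' → c = c') :
    (readingWord α T).Nodup := by
  unfold readingWord
  rw [List.nodup_flatMap]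
  constructor
  · intro x hx
    have hx' : x < α.length := by simpa using List.mem_reverse.mp hx
    rw [List.nodup_reverse]
    refine List.Nodup.map_on ?_ List.nodup_range
    intro j hj j' hj' hEq
    have h := hinj (x, j) (x, j') ⟨hx', by simpa using hj⟩ ⟨hx', by simpa using hj'⟩ hEq
    exact congrArg Prod.snd h
  · refine List.Pairwise.imp_of_mem ?_ (List.nodup_reverse.mpr List.nodup_range)
    intro a b ha hb hne
    have ha' : a < α.length := by simpa using List.mem_reverse.mp ha
    have hb' : b < α.length := by simpa using List.mem_reverse.mp hb
    intro v hva hvb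
    simp only [List.mem_reverse, List.mem_map, List.mem_range] at hva hvb
    obtain ⟨j, hj, hj2⟩ := hva
    obtain ⟨j', hj', hj2'⟩ := hvb
    have h := hinj (a, j) (b, j') ⟨ha', hj⟩ ⟨hb', hj'⟩ (by rw [hj2, hj2'])
    exact hne (congrArg Prod.fst h)

theorem piRS_inversions_succ (n : ℕ) (α : List ℕ) (hα : IsComposition α n)
    (T₁ T₂ : Filling) (hT₁ : IsSIT α T₁) (hT₂ : IsSIT α T₂)
    (i : ℕ) (hi1 : 1 ≤ i) (hi2 : i ≤ n - 1)
    (h : piRS α i (some T₁) = some T₂) (hne : T₁ ≠ T₂) :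
    inversions (readingWord α T₂) = inversions (readingWord α T₁) + 1 := by
  obtain ⟨hpos, hsum⟩ := hα
  have h' : (if SuccAbove α T₁ i then some T₁
      else if SuccSameRow α T₁ i then none
      else some (swapEntries i T₁)) = some T₂ := h
  have hnotA : ¬ SuccAbove α T₁ i := fun hA => hne (by
    rw [if_pos hA] at h'; exact Option.some.inj h')
  have hnotS : ¬ SuccSameRow α T₁ i := fun hS => by
    rw [if_neg hnotA, if_pos hS] at h'; cases h'
  have hswap : T₂ = swapEntries i T₁ := by
    rw [if_neg hnotA, if_neg hnotS] at h'
    exact (Option.some.inj h').symm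
  obtain ⟨⟨hzero, hbound, hinj, hsurj⟩, hcol, hrow⟩ := hT₁
  obtain ⟨c, hc, hci⟩ := hsurj i hi1 (by omega)
  obtain ⟨c', hc', hci'⟩ := hsurj (i + 1) (by omega) (by omega)
  have hlt : c'.1 < c.1 := by
    rcases Nat.lt_trichotomy c.1 c'.1 with h' | h' | h'
    · exact absurd ⟨c, c', hc, hc', hci, hci', h'⟩ hnotA
    · exact absurd ⟨c, c', hc, hc', hci, hci', h'⟩ hnotS
    · exact h'
  set g : ℕ → List ℕ := fun r => ((List.range (α.getD r 0)).map fun j => T₁ (r, j)).reverse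
    with hg
  have hc1 : c.1 < α.length := hc.1
  have hc1' : c'.1 < α.length := hc'.1
  have hsplit : (List.range α.length).reverse =
      (List.range' (c'.1 + 1) (α.length - (c'.1 + 1))).reverse ++
      (List.range' 0 (c'.1 + 1)).reverse := by
    rw [← List.reverse_append]
    congr 1
    rw [List.range_eq_range']
    have h2 := List.range'_append (s := 0) (m := c'.1 + 1) (n := α.length - (c'.1 + 1)) (step := 1)
    simp only [one_mul, zero_add] at h2
    have hLc : (c'.1 + 1) + (α.length - (c'.1 + 1)) = α.length := by omega
    rw [h2, hLc]
  have hw : readingWord α T₁ =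
      ((List.range' (c'.1 + 1) (α.length - (c'.1 + 1))).reverse).flatMap g ++
      ((List.range' 0 (c'.1 + 1)).reverse).flatMap g := by
    rw [readingWord, hsplit, List.flatMap_append]
  have hmemi : i ∈ ((List.range' (c'.1 + 1) (α.length - (c'.1 + 1))).reverse).flatMap g := by
    rw [List.mem_flatMap]
    refine ⟨c.1, ?_, ?_⟩
    · rw [List.mem_reverse, List.mem_range'_1]; omega
    · rw [hg]
      simp only [List.mem_reverse, List.mem_map, List.mem_range]
      exact ⟨c.2, hc.2, by rw [Prod.mk.eta]; exact hci⟩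
  have hmemi1 : i + 1 ∈ ((List.range' 0 (c'.1 + 1)).reverse).flatMap g := by
    rw [List.mem_flatMap]
    refine ⟨c'.1, ?_, ?_⟩
    · rw [List.mem_reverse, List.mem_range'_1]; omega
    · rw [hg]
      simp only [List.mem_reverse, List.mem_map, List.mem_range]
      exact ⟨c'.2, hc'.2, by rw [Prod.mk.eta]; exact hci'⟩
  obtain ⟨p, q, hpq, hqlen, hgp, hgq⟩ := exists_lt_getD hmemi hmemi1
  rw [← hw] at hqlen hgp hgq
  have hndp := readingWord_nodup α T₁ hinj
  have hnd : ∀ r r', r < (readingWord α T₁).length → r' < (readingWord α T₁).length →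
      (readingWord α T₁).getD r 0 = (readingWord α T₁).getD r' 0 → r = r' := by
    intro r r' hr hr' hEq
    rw [List.getD_eq_getElem _ _ hr, List.getD_eq_getElem _ _ hr'] at hEq
    exact (hndp.getElem_inj_iff).mp hEq
  have hT2w : readingWord α T₂ = (readingWord α T₁).map
      (fun x => if x = i then i + 1 else if x = i + 1 then i else x) := by
    rw [hswap]
    exact readingWord_comp α (fun x => if x = i then i + 1 else if x = i + 1 then i else x) T₁
  rw [hT2w]
  exact inversions_swap _ i p q hpq hqlen hgp hgq hnd

end ImmHecke
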